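/- Suppose for each x ∈ H there exists l_x ∈ H such that |u(x+y) - u(x) - ⟪l_x, y⟫| ≤ ‖y‖²/k for all y ∈ H, with k > 0. Then ‖l_{x+y} - l_x‖ ≤ 6‖y‖/k for all x, y ∈ H. -/

import Mathlib

open scoped RealInnerProductSpace

theorem sub_differential_lipschitz {H : Type*} [NormedAddCommGroup H]
    [InnerProductSpace ℝ H]
    (u : H → ℝ) (k : ℝ) (hk : 0 < k) (l : H → H)
    (hl : ∀ x y : H, |u (x + y) - u x - ⟪l x, y⟫| ≤ ‖y‖ ^ 2 / k) :
    ∀ x y : H, ‖l (x + y) - l x‖ ≤ 6 * ‖y‖ / k := by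
  intro x y
  set d := l (x + y) - l x with hd
  by_cases hy : y = 0
  · simp [hd, hy]
  by_cases hdz : d = 0
  · rw [hd] at hdz
    rw [hd, hdz]
    simp
    positivity
  have hdn : 0 < ‖d‖ := norm_pos_iff.mpr hdz
  have hyn : 0 < ‖y‖ := norm_pos_iff.mpr hy
  set z := (‖y‖ / ‖d‖) • d with hz
  have hznorm : ‖z‖ = ‖y‖ := by
    rw [hz, norm_smul, Real.norm_eq_abs, abs_of_pos (div_pos hyn hdn)]
    field_simp
  have key : ⟪d, z⟫ ≤ (‖z‖ ^ 2 + ‖y + z‖ ^ 2 + ‖y‖ ^ 2) / k := by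
    have h1 := hl (x + y) z
    have h2 := hl x (y + z)
    have h3 := hl x y
    rw [abs_le] at h1 h2 h3
    rw [← add_assoc] at h2
    have e1 : ⟪d, z⟫ = ⟪l (x + y), z⟫ - ⟪l x, z⟫ := by
      rw [hd, inner_sub_left]
    have e2 : ⟪l x, y + z⟫ = ⟪l x, y⟫ + ⟪l x, z⟫ := inner_add_right _ _ _
    rw [e1]
    have hz2 : ‖z‖ ^ 2 / k + ‖y + z‖ ^ 2 / k + ‖y‖ ^ 2 / k
        = (‖z‖ ^ 2 + ‖y + z‖ ^ 2 + ‖y‖ ^ 2) / k := by ring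
    rw [← hz2]
    linarith [h1.1, h1.2, h2.1, h2.2, h3.1, h3.2]
  have hdz2 : ⟪d, z⟫ = ‖y‖ * ‖d‖ := by
    rw [hz, real_inner_smul_right, real_inner_self_eq_norm_sq]
    field_simp
  have hyz : ‖y + z‖ ^ 2 ≤ 4 * ‖y‖ ^ 2 := by
    have := norm_add_le y z
    rw [hznorm] at this
    nlinarith [norm_nonneg (y + z)]
  rw [hdz2, hznorm] at key
  rw [le_div_iff₀ hk] at key ⊢
  nlinarith [key, hyn, hk]
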